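/- A quasi-median graph is a median graph if and only if it is triangle-free, which holds if and only if every hyperplane delimits exactly two sectors. In particular: in a quasi-median graph, every hyperplane of the graph delimits exactly two sectors if and only if the graph contains no triangle. -/

import Mathlib

open SimpleGraph

variable {V : Type*}

/-- Triangle condition of weak modularity. -/
def TriangleCond (X : SimpleGraph V) : Prop :=
  ∀ o x y : V, X.Adj x y → X.dist o x = X.dist o y →
    ∃ w : V, X.Adj w x ∧ X.Adj w y ∧ X.dist o w + 1 = X.dist o x

/-- Quadrangle condition of weak modularity. -/
def QuadCond (X : SimpleGraph V) : Prop :=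
  ∀ o x y z : V, X.Adj z x → X.Adj z y → X.dist x y = 2 →
    X.dist o z = X.dist o x + 1 → X.dist o z = X.dist o y + 1 →
    ∃ w : V, X.Adj w x ∧ X.Adj w y ∧ X.dist o w + 2 = X.dist o z

/-- No induced copy of the complete bipartite graph `K_{2,3}`. -/
def NoInducedK23 (X : SimpleGraph V) : Prop :=
  ¬ ∃ a b x y z : V, a ≠ b ∧ x ≠ y ∧ y ≠ z ∧ x ≠ z ∧
    X.Adj a x ∧ X.Adj a y ∧ X.Adj a z ∧ X.Adj b x ∧ X.Adj b y ∧ X.Adj b z ∧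
    ¬ X.Adj a b ∧ ¬ X.Adj x y ∧ ¬ X.Adj y z ∧ ¬ X.Adj x z

/-- No induced copy of `K₄` minus an edge. -/
def NoInducedK4minus (X : SimpleGraph V) : Prop :=
  ¬ ∃ a b c d : V, X.Adj a b ∧ X.Adj a c ∧ X.Adj a d ∧ X.Adj b c ∧ X.Adj b d ∧
    c ≠ d ∧ ¬ X.Adj c d

/-- A quasi-median graph: a connected weakly modular graph with no induced
`K_{2,3}` and no induced `K₄⁻`. -/
def QuasiMedian (X : SimpleGraph V) : Prop :=
  X.Connected ∧ TriangleCond X ∧ QuadCond X ∧ NoInducedK23 X ∧ NoInducedK4minus X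

/-- `m` lies on a geodesic from `a` to `b`. -/
def InInterval (X : SimpleGraph V) (a m b : V) : Prop :=
  X.dist a m + X.dist m b = X.dist a b

/-- `m` is a median of the triple `a, b, c`. -/
def IsMedianOf (X : SimpleGraph V) (m a b c : V) : Prop :=
  InInterval X a m b ∧ InInterval X b m c ∧ InInterval X a m c

/-- A median graph: connected, and every triple of vertices has a unique median. -/
def MedianGraph (X : SimpleGraph V) : Prop :=
  X.Connected ∧ ∀ a b c : V, ∃! m : V, IsMedianOf X m a b c

/-- The elementary relation on edges generating hyperplanes: two edges of a common
triangle, or opposite edges of an induced 4-cycle. -/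
def EdgeRel (X : SimpleGraph V) (e f : Sym2 V) : Prop :=
  (∃ a b c : V, X.Adj a b ∧ X.Adj b c ∧ X.Adj a c ∧ e = s(a, b) ∧ f = s(b, c)) ∨
  (∃ a b c d : V, X.Adj a b ∧ X.Adj b c ∧ X.Adj c d ∧ X.Adj d a ∧
    a ≠ c ∧ ¬ X.Adj a c ∧ b ≠ d ∧ ¬ X.Adj b d ∧ e = s(a, b) ∧ f = s(c, d))

/-- A hyperplane: an equivalence class of edges under the reflexive-transitive
closure of `EdgeRel`. -/
def IsHyperplane (X : SimpleGraph V) (J : Set (Sym2 V)) : Prop :=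
  ∃ e ∈ X.edgeSet, J = {f | Relation.ReflTransGen (EdgeRel X) e f}

/-- The hyperplane `J` separates `x` and `y`. -/
def SeparatesPts (X : SimpleGraph V) (J : Set (Sym2 V)) (x y : V) : Prop :=
  ¬ (X.deleteEdges J).Reachable x y

/-- A sector delimited by `J`: a connected component of `X` minus the edges of `J`. -/
def IsSectorOf (X : SimpleGraph V) (J : Set (Sym2 V)) (S : Set V) : Prop :=
  ∃ v : V, S = {w | (X.deleteEdges J).Reachable v w}

/-- A gated subset of vertices. -/
def IsGated (X : SimpleGraph V) (Y : Set V) : Prop :=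
  Y.Nonempty ∧ ∀ x : V, ∃ y ∈ Y, ∀ z ∈ Y, X.dist x z = X.dist x y + X.dist y z

/-- The gated hull of a set of vertices. -/
def GatedHull (X : SimpleGraph V) (A : Set V) : Set V :=
  ⋂₀ {Y : Set V | IsGated X Y ∧ A ⊆ Y}

/-- A polytope: the gated hull of a non-empty finite set of vertices. -/
def IsPolytope (X : SimpleGraph V) (P : Set V) : Prop :=
  ∃ A : Finset V, A.Nonempty ∧ P = GatedHull X (A : Set V)

/-- `HypOf X Y`: the hyperplanes separating two vertices of `Y` (the hyperplanes
crossing `Y`). -/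
def HypOf (X : SimpleGraph V) (Y : Set V) : Set (Set (Sym2 V)) :=
  {J | IsHyperplane X J ∧ ∃ a ∈ Y, ∃ b ∈ Y, SeparatesPts X J a b}

/-- The hyperplanes separating `A` from `B` (placing them in two distinct sectors). -/
def SepHyp (X : SimpleGraph V) (A B : Set V) : Set (Set (Sym2 V)) :=
  {J | IsHyperplane X J ∧ ∃ S T : Set V, IsSectorOf X J S ∧ IsSectorOf X J T ∧
    S ≠ T ∧ A ⊆ S ∧ B ⊆ T}

/-- The covering relation for polytopes: `P ⊊ Q` with no polytope strictly between. -/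
def PolyCover (X : SimpleGraph V) (P Q : Set V) : Prop :=
  IsPolytope X P ∧ IsPolytope X Q ∧ P ⊂ Q ∧
    ¬ ∃ R : Set V, IsPolytope X R ∧ P ⊂ R ∧ R ⊂ Q

abbrev PolyVert (X : SimpleGraph V) := {P : Set V // IsPolytope X P}

/-- The graph of polytopes: the covering graph of the inclusion poset of polytopes. -/
def PolyGraph (X : SimpleGraph V) : SimpleGraph (PolyVert X) where
  Adj P Q := PolyCover X P.val Q.val ∨ PolyCover X Q.val P.val
  symm := by constructor; intro P Q h; exact Or.symm h
  loopless := by constructor; intro P h; rcases h with h | h <;> exact (ssubset_irrefl P.val) h.2.2.1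

/-- Two hyperplanes are transverse: there is an induced 4-cycle whose two pairs of
opposite edges belong respectively to the two hyperplanes. -/
def Transverse (X : SimpleGraph V) (J₁ J₂ : Set (Sym2 V)) : Prop :=
  ∃ a b c d : V, X.Adj a b ∧ X.Adj b c ∧ X.Adj c d ∧ X.Adj d a ∧
    a ≠ c ∧ ¬ X.Adj a c ∧ b ≠ d ∧ ¬ X.Adj b d ∧
    s(a, b) ∈ J₁ ∧ s(c, d) ∈ J₁ ∧ s(b, c) ∈ J₂ ∧ s(d, a) ∈ J₂

/-- A prism: a polytope whose crossing hyperplanes are pairwise transverse (this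
characterises the gated subgraphs decomposing as finite products of cliques). -/
def IsPrism (X : SimpleGraph V) (P : Set V) : Prop :=
  IsPolytope X P ∧ ∀ J₁ ∈ HypOf X P, ∀ J₂ ∈ HypOf X P, J₁ ≠ J₂ → Transverse X J₁ J₂

/-- The covering relation for prisms. -/
def PrismCover (X : SimpleGraph V) (P Q : Set V) : Prop :=
  IsPrism X P ∧ IsPrism X Q ∧ P ⊂ Q ∧
    ¬ ∃ R : Set V, IsPrism X R ∧ P ⊂ R ∧ R ⊂ Q

abbrev PrismVert (X : SimpleGraph V) := {P : Set V // IsPrism X P}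

/-- The graph of prisms. -/
def PrismGraph (X : SimpleGraph V) : SimpleGraph (PrismVert X) where
  Adj P Q := PrismCover X P.val Q.val ∨ PrismCover X Q.val P.val
  symm := by constructor; intro P Q h; exact Or.symm h
  loopless := by constructor; intro P h; rcases h with h | h <;> exact (ssubset_irrefl P.val) h.2.2.1

/-- A convex set of vertices: closed under taking points on geodesics. -/
def IsConvexSet (X : SimpleGraph V) (Y : Set V) : Prop :=
  ∀ a ∈ Y, ∀ b ∈ Y, ∀ m : V, InInterval X a m b → m ∈ Y

/-- The convex hull of a set of vertices. -/
def ConvHull (X : SimpleGraph V) (A : Set V) : Set V :=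
  ⋂₀ {Y : Set V | IsConvexSet X Y ∧ A ⊆ Y}

/-- The subgraph of `X` induced on `Y` (kept on the same vertex set). -/
def RestrictTo (X : SimpleGraph V) (Y : Set V) : SimpleGraph V where
  Adj a b := X.Adj a b ∧ a ∈ Y ∧ b ∈ Y
  symm := by constructor; intro a b h; exact ⟨h.1.symm, h.2.2, h.2.1⟩
  loopless := by constructor; intro a h; exact X.irrefl h.1
namespace QMAux

open Relation

variable {X : SimpleGraph V}

/-- triangle-freeness -/
def TFree (X : SimpleGraph V) : Prop := ¬ ∃ a b c : V, X.Adj a b ∧ X.Adj b c ∧ X.Adj a c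

lemma dist_step (hc : X.Connected) {x y : V} {n : ℕ} (h : X.dist x y = n + 1) :
    ∃ z, X.Adj x z ∧ X.dist z y = n := by
  obtain ⟨p, hp⟩ := exists_walk_of_dist_ne_zero (G := X) (by omega : X.dist x y ≠ 0)
  cases p with
  | nil => simp [SimpleGraph.dist_self] at h
  | cons hadj q =>
    rename_i z
    refine ⟨z, hadj, ?_⟩
    have h1 : X.dist z y ≤ q.length := dist_le q
    have h2 : X.dist x y ≤ X.dist x z + X.dist z y := hc.dist_triangle
    have h3 : X.dist x z = 1 := dist_eq_one_iff_adj.mpr hadj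
    simp [SimpleGraph.Walk.length_cons] at hp
    omega

lemma adj_dist_le (hc : X.Connected) {x y : V} (h : X.Adj x y) (o : V) :
    X.dist o y ≤ X.dist o x + 1 := by
  have h1 : X.dist o y ≤ X.dist o x + X.dist x y := hc.dist_triangle
  have h3 : X.dist x y = 1 := dist_eq_one_iff_adj.mpr h
  omega

/-- bipartiteness-type dichotomy from triangle-freeness + triangle condition -/
lemma bip (hT : TFree X) (hTC : TriangleCond X) (hc : X.Connected)
    {x y : V} (h : X.Adj x y) (o : V) :
    X.dist o y = X.dist o x + 1 ∨ X.dist o x = X.dist o y + 1 := by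
  have h1 := adj_dist_le hc h o
  have h2 := adj_dist_le hc h.symm o
  rcases Nat.lt_trichotomy (X.dist o x) (X.dist o y) with hl | he | hg
  · left; omega
  · exact absurd (hTC o x y h he) (by
      rintro ⟨w, hwx, hwy, -⟩
      exact hT ⟨w, x, y, hwx, h, hwy⟩)
  · right; omega

/-- point-first version -/
lemma bip' (hT : TFree X) (hTC : TriangleCond X) (hc : X.Connected)
    {x y : V} (h : X.Adj x y) (o : V) :
    X.dist y o = X.dist x o + 1 ∨ X.dist x o = X.dist y o + 1 := by
  have h0 := bip hT hTC hc h o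
  have e1 : X.dist o y = X.dist y o := dist_comm
  have e2 : X.dist o x = X.dist x o := dist_comm
  omega

lemma side_dich (hT : TFree X) (hTC : TriangleCond X) (hc : X.Connected)
    {m n : V} (h : X.Adj m n) (x : V) :
    X.dist x m < X.dist x n ∨ X.dist x n < X.dist x m := by
  have := bip hT hTC hc h x; omega

section Wall

variable (hT : TFree X) (hTC : TriangleCond X) (hQC : QuadCond X)
  (hK23 : NoInducedK23 X) (hc : X.Connected)

include hT hTC hQC hK23 hc in
/-- K3 one direction: for an induced square `p-q-r-s`, a vertex closer to `p`
than to `q` is closer to `s` than to `r`. -/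
lemma square_W {p q r s : V} (hpq : X.Adj p q) (hqr : X.Adj q r)
    (hrs : X.Adj r s) (hsp : X.Adj s p) (hprn : p ≠ r) (hpr : ¬ X.Adj p r)
    (hqsn : q ≠ s) (hqs : ¬ X.Adj q s) (t : V) (h : X.dist t p < X.dist t q) :
    X.dist t s < X.dist t r := by
  have hq : X.dist t q = X.dist t p + 1 := by
    have := bip hT hTC hc hpq t; omega
  have hs := bip hT hTC hc hsp.symm t
  have hr := bip hT hTC hc hqr t
  -- cases
  rcases hs with hs1 | hs2
  · -- d t s = d t p + 1
    rcases hr with hr1 | hr2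
    · omega
    · -- bad case : d t r = d t p
      exfalso
      have hpr2 : X.dist p r = 2 := by
        have h1 : X.dist p r ≤ X.dist p q + X.dist q r := hc.dist_triangle
        have h2 : X.dist p q = 1 := dist_eq_one_iff_adj.mpr hpq
        have h3 : X.dist q r = 1 := dist_eq_one_iff_adj.mpr hqr
        have h4 : X.dist p r ≠ 0 := fun h0 => hprn (hc.dist_eq_zero_iff.mp h0)
        have h5 : X.dist p r ≠ 1 := fun h0 => hpr (dist_eq_one_iff_adj.mp h0)
        omega
      obtain ⟨w, hwp, hwr, hw⟩ := hQC t p r q hpq.symm hqr hpr2 (by omega) (by omega)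
      refine hK23 ⟨p, r, q, s, w, hprn, hqsn, ?_, ?_, hpq, hsp.symm, hwp.symm,
        hqr.symm, hrs, hwr.symm, hpr, hqs, ?_, ?_⟩
      · intro h0; subst h0; omega
      · intro h0; subst h0; omega
      · intro h0; exact hT ⟨p, s, w, hsp.symm, h0, hwp.symm⟩
      · intro h0; exact hT ⟨p, q, w, hpq, h0, hwp.symm⟩
  · rcases hr with hr1 | hr2 <;> omega

include hT hTC hQC hK23 hc in
/-- K3: opposite sides of an induced square determine the same wall. -/
lemma square_W_iff {p q r s : V} (hpq : X.Adj p q) (hqr : X.Adj q r)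
    (hrs : X.Adj r s) (hsp : X.Adj s p) (hprn : p ≠ r) (hpr : ¬ X.Adj p r)
    (hqsn : q ≠ s) (hqs : ¬ X.Adj q s) (t : V) :
    (X.dist t p < X.dist t q ↔ X.dist t s < X.dist t r) := by
  constructor
  · exact square_W hT hTC hQC hK23 hc hpq hqr hrs hsp hprn hpr hqsn hqs t
  · intro h
    by_contra h0
    have h1 : X.dist t q < X.dist t p := by
      have := side_dich hT hTC hc hpq t; tauto
    have := square_W hT hTC hQC hK23 hc hpq.symm hsp.symm hrs.symm hqr.symm
      hqsn hqs hprn hpr t h1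
    omega

variable {a₀ b₀ : V}

include hT hTC hQC hK23 hc in
/-- Q : every edge in the hyperplane class of `s(a₀,b₀)` crosses the same wall,
with a consistent orientation. -/
lemma class_oriented (hab : X.Adj a₀ b₀) {f : Sym2 V}
    (hf : Relation.ReflTransGen (EdgeRel X) s(a₀, b₀) f) :
    ∃ u v : V, f = s(u, v) ∧ X.Adj u v ∧
      ∀ x, (X.dist x u < X.dist x v ↔ X.dist x a₀ < X.dist x b₀) := by
  induction hf with
  | refl => exact ⟨a₀, b₀, rfl, hab, fun x => Iff.rfl⟩
  | tail h1 h2 ih =>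
    obtain ⟨u, v, rfl, huv, hiff⟩ := ih
    rcases h2 with ⟨x, y, z, hxy, hyz, hxz, he, hf⟩ | ⟨p, q, r, s, hpq, hqr, hrs, hsp,
        hprn, hpr, hqsn, hqs, he, hf⟩
    · exact absurd ⟨x, y, z, hxy, hyz, hxz⟩ hT
    · subst hf
      rcases Sym2.eq_iff.mp he with ⟨h3, h4⟩ | ⟨h3, h4⟩
    -- case u = p, v = q
      · subst h3; subst h4
        refine ⟨s, r, Sym2.eq_swap, hrs.symm, fun t => ?_⟩
        rw [← hiff t]
        exact (square_W_iff hT hTC hQC hK23 hc hpq hqr hrs hsp hprn hpr hqsn hqs t).symm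
      -- case u = q, v = p
      · subst h3; subst h4
        refine ⟨r, s, rfl, hrs, fun t => ?_⟩
        rw [← hiff t]
        exact (square_W_iff hT hTC hQC hK23 hc hpq.symm hsp.symm hrs.symm hqr.symm
          hqsn hqs hprn hpr t).symm

end Wall

end QMAux
namespace QMAux
set_option linter.unusedSectionVars false
section Wall2

open Relation

variable {X : SimpleGraph V}
variable (hT : TFree X) (hTC : TriangleCond X) (hQC : QuadCond X)
  (hK23 : NoInducedK23 X) (hc : X.Connected)
variable {a₀ b₀ : V}

include hT hTC hQC hK23 hc in
/-- K2' : an edge crossing the wall of `s(a₀,b₀)` belongs to its hyperplane class. -/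
lemma cross_mem (hab : X.Adj a₀ b₀) :
    ∀ p : ℕ, ∀ u v : V, X.Adj u v → X.dist u a₀ < X.dist u b₀ →
      X.dist v b₀ < X.dist v a₀ → X.dist u a₀ = p →
      Relation.ReflTransGen (EdgeRel X) s(a₀, b₀) s(u, v) := by
  intro p
  induction p using Nat.strong_induction_on with
  | _ p ih =>
  intro u v huv hu hv hup
  have hub : X.dist u b₀ = p + 1 := by
    have := bip hT hTC hc hab u; omega
  have hva' : X.dist v a₀ = X.dist v b₀ + 1 := by
    have := bip hT hTC hc hab v; omega
  have hvb : X.dist v b₀ = p := by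
    have t1 : X.dist v a₀ ≤ X.dist v u + X.dist u a₀ := hc.dist_triangle
    have t2 : X.dist u b₀ ≤ X.dist u v + X.dist v b₀ := hc.dist_triangle
    have e1 : X.dist v u = 1 := dist_eq_one_iff_adj.mpr huv.symm
    have e2 : X.dist u v = 1 := dist_eq_one_iff_adj.mpr huv
    omega
  match p, hup, hub, hvb with
  | 0, hup, hub, hvb =>
    have h1 : u = a₀ := hc.dist_eq_zero_iff.mp hup
    have h2 : v = b₀ := hc.dist_eq_zero_iff.mp hvb
    subst h1; subst h2
    exact Relation.ReflTransGen.refl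
  | (k+1), hup, hub, hvb =>
  have hva : X.dist v a₀ = k + 2 := by omega
  obtain ⟨u', huu', hu'a⟩ := dist_step hc hup
  have hu'b : X.dist u' b₀ = k + 1 := by
    have t1 : X.dist u' b₀ ≤ X.dist u' a₀ + X.dist a₀ b₀ := hc.dist_triangle
    have t2 : X.dist u b₀ ≤ X.dist u u' + X.dist u' b₀ := hc.dist_triangle
    have e1 : X.dist a₀ b₀ = 1 := dist_eq_one_iff_adj.mpr hab
    have e2 : X.dist u u' = 1 := dist_eq_one_iff_adj.mpr huu'
    omega
  have hne : u' ≠ v := by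
    intro h0; rw [h0] at hu'a; omega
  have hnadj : ¬ X.Adj u' v := by
    intro h0
    have t1 : X.dist v a₀ ≤ X.dist v u' + X.dist u' a₀ := hc.dist_triangle
    have e1 : X.dist v u' = 1 := dist_eq_one_iff_adj.mpr h0.symm
    omega
  have hd2 : X.dist u' v = 2 := by
    have t1 : X.dist u' v ≤ X.dist u' u + X.dist u v := hc.dist_triangle
    have e1 : X.dist u' u = 1 := dist_eq_one_iff_adj.mpr huu'.symm
    have e2 : X.dist u v = 1 := dist_eq_one_iff_adj.mpr huv
    have e3 : X.dist u' v ≠ 0 := fun h0 => hne (hc.dist_eq_zero_iff.mp h0)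
    have e4 : X.dist u' v ≠ 1 := fun h0 => hnadj (dist_eq_one_iff_adj.mp h0)
    omega
  have c1 : X.dist b₀ u = X.dist u b₀ := dist_comm
  have c2 : X.dist b₀ u' = X.dist u' b₀ := dist_comm
  have c3 : X.dist b₀ v = X.dist v b₀ := dist_comm
  obtain ⟨w, hwu', hwv, hw⟩ := hQC b₀ u' v u huu' huv hd2 (by omega) (by omega)
  have hwb : X.dist w b₀ = k := by
    have c4 : X.dist b₀ w = X.dist w b₀ := dist_comm
    omega
  have hwa : X.dist w a₀ = k + 1 := by
    have t1 : X.dist w a₀ ≤ X.dist w u' + X.dist u' a₀ := hc.dist_triangle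
    have t2 : X.dist v a₀ ≤ X.dist v w + X.dist w a₀ := hc.dist_triangle
    have e1 : X.dist w u' = 1 := dist_eq_one_iff_adj.mpr hwu'
    have e2 : X.dist v w = 1 := dist_eq_one_iff_adj.mpr hwv.symm
    omega
  have hchain := ih k (by omega) u' w hwu'.symm (by omega) (by omega) hu'a
  refine hchain.tail (Or.inr ⟨u', w, v, u, hwu'.symm, hwv, huv.symm, huu', hne, hnadj,
    ?_, ?_, rfl, Sym2.eq_swap⟩)
  · intro h0; rw [h0] at hwb; omega
  · intro h0
    have t2 : X.dist u b₀ ≤ X.dist u w + X.dist w b₀ := hc.dist_triangle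
    have e1 : X.dist u w = 1 := dist_eq_one_iff_adj.mpr h0.symm
    omega

include hT hTC hQC hK23 hc in
/-- a vertex one step along a geodesic between two vertices of the halfspace
`W(a₀,b₀)` stays in the halfspace. -/
lemma no_cross_step (hab : X.Adj a₀ b₀) {x y x₁ : V}
    (hx : X.dist x a₀ < X.dist x b₀) (hy : X.dist y a₀ < X.dist y b₀)
    (hadj : X.Adj x x₁) (hgeo : X.dist x₁ y + 1 = X.dist x y) :
    X.dist x₁ a₀ < X.dist x₁ b₀ := by
  by_contra h0
  have hx₁ : X.dist x₁ b₀ < X.dist x₁ a₀ := by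
    have := side_dich hT hTC hc hab x₁; omega
  have hmem := cross_mem hT hTC hQC hK23 hc hab (X.dist x a₀) x x₁ hadj hx hx₁ rfl
  obtain ⟨u, v, heq, huv, hiff⟩ := class_oriented hT hTC hQC hK23 hc hab hmem
  have huW : X.dist u a₀ < X.dist u b₀ := by
    refine (hiff u).mp ?_
    have : X.dist u u = 0 := dist_self
    have : 0 < X.dist u v := hc.pos_dist_of_ne huv.ne
    omega
  rcases Sym2.eq_iff.mp heq with ⟨h1, h2⟩ | ⟨h1, h2⟩
  · -- x = u, x₁ = v
    subst h1; subst h2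
    have hyW := (hiff y).mpr hy
    have c1 : X.dist y x₁ = X.dist x₁ y := dist_comm
    have c2 : X.dist y x = X.dist x y := dist_comm
    omega
  · subst h1; subst h2
    omega

include hT hTC hQC hK23 hc in
/-- halfspaces are convex -/
lemma convex_W (hab : X.Adj a₀ b₀) :
    ∀ k x m y, X.dist x a₀ < X.dist x b₀ → X.dist y a₀ < X.dist y b₀ →
      X.dist x m + X.dist m y = X.dist x y → X.dist x m = k →
      X.dist m a₀ < X.dist m b₀ := by
  intro k
  induction k with
  | zero =>
    intro x m y hx _ _ h0
    have : x = m := hc.dist_eq_zero_iff.mp h0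
    exact this ▸ hx
  | succ k ih =>
    intro x m y hx hy hgeo hk
    obtain ⟨x₁, hadj, hx₁m⟩ := dist_step hc hk
    have t1 : X.dist x₁ y ≤ X.dist x₁ m + X.dist m y := hc.dist_triangle
    have t2 : X.dist x y ≤ X.dist x x₁ + X.dist x₁ y := hc.dist_triangle
    have e1 : X.dist x x₁ = 1 := dist_eq_one_iff_adj.mpr hadj
    have hx₁W := no_cross_step hT hTC hQC hK23 hc hab hx hy hadj (by omega)
    exact ih x₁ m y hx₁W hy (by omega) hx₁m

end Wall2
end QMAux
namespace QMAux
set_option linter.unusedSectionVars false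
section Sectors

open Relation

variable {X : SimpleGraph V}
variable (hT : TFree X) (hTC : TriangleCond X) (hQC : QuadCond X)
  (hK23 : NoInducedK23 X) (hc : X.Connected)
variable {a₀ b₀ : V} {J : Set (Sym2 V)}

include hT hTC hQC hK23 hc in
lemma edge_in_W_not_mem (hab : X.Adj a₀ b₀)
    (hJ : J = {f | Relation.ReflTransGen (EdgeRel X) s(a₀, b₀) f})
    {u v : V} (hadj : X.Adj u v) (hu : X.dist u a₀ < X.dist u b₀)
    (hv : X.dist v a₀ < X.dist v b₀) : s(u, v) ∉ J := by
  intro hmem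
  rw [hJ, Set.mem_setOf_eq] at hmem
  obtain ⟨p, q, heq, hpq, hiff⟩ := class_oriented hT hTC hQC hK23 hc hab hmem
  have hpW : X.dist p a₀ < X.dist p b₀ := by
    refine (hiff p).mp ?_
    have : X.dist p p = 0 := dist_self
    have : 0 < X.dist p q := hc.pos_dist_of_ne hpq.ne
    omega
  have hqW : ¬ (X.dist q a₀ < X.dist q b₀) := by
    intro h0
    have := (hiff q).mpr h0
    have : X.dist q q = 0 := dist_self
    omega
  rcases Sym2.eq_iff.mp heq with ⟨h1, h2⟩ | ⟨h1, h2⟩ <;> subst h1 <;> subst h2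
  · exact hqW hv
  · exact hqW hu

include hT hTC hQC hK23 hc in
lemma reach_of_W (hab : X.Adj a₀ b₀)
    (hJ : J = {f | Relation.ReflTransGen (EdgeRel X) s(a₀, b₀) f}) :
    ∀ k v, X.dist v a₀ < X.dist v b₀ → X.dist v a₀ = k →
      (X.deleteEdges J).Reachable a₀ v := by
  intro k
  induction k with
  | zero =>
    intro v _ h0
    have : v = a₀ := hc.dist_eq_zero_iff.mp h0
    exact this ▸ Reachable.refl _
  | succ k ih =>
    intro v hv hk
    obtain ⟨v₁, hadj, hv₁a⟩ := dist_step hc hk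
    have haW : X.dist a₀ a₀ < X.dist a₀ b₀ := by
      have e1 : X.dist a₀ a₀ = 0 := dist_self
      have e2 : X.dist a₀ b₀ = 1 := dist_eq_one_iff_adj.mpr hab
      omega
    have hv₁W := no_cross_step hT hTC hQC hK23 hc hab hv haW hadj (by omega)
    have hnm : s(v₁, v) ∉ J :=
      edge_in_W_not_mem hT hTC hQC hK23 hc hab hJ hadj.symm hv₁W hv
    have hstep : (X.deleteEdges J).Adj v₁ v := by
      rw [SimpleGraph.deleteEdges_adj]; exact ⟨hadj.symm, hnm⟩
    exact (ih v₁ hv₁W hv₁a).trans hstep.reachable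

include hT hTC hQC hK23 hc in
lemma W_of_reach (hab : X.Adj a₀ b₀)
    (hJ : J = {f | Relation.ReflTransGen (EdgeRel X) s(a₀, b₀) f})
    {c c' : V} (w : (X.deleteEdges J).Walk c c')
    (hcW : X.dist c a₀ < X.dist c b₀) : X.dist c' a₀ < X.dist c' b₀ := by
  induction w with
  | nil => exact hcW
  | cons h q ihq =>
    rename_i d e _
    rw [SimpleGraph.deleteEdges_adj] at h
    obtain ⟨hadj, hnm⟩ := h
    refine ihq ?_
    by_contra h0
    have heW : X.dist e b₀ < X.dist e a₀ := by
      have := side_dich hT hTC hc hab e; omega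
    exact hnm (by
      rw [hJ, Set.mem_setOf_eq]
      exact cross_mem hT hTC hQC hK23 hc hab _ d e hadj hcW heW rfl)

include hT hTC hQC hK23 hc in
/-- Part 3: under triangle-freeness every hyperplane delimits exactly two sectors. -/
lemma two_sectors {J' : Set (Sym2 V)} (hJ' : IsHyperplane X J') :
    ∃ S₁ S₂ : Set V, S₁ ≠ S₂ ∧ {S : Set V | IsSectorOf X J' S} = {S₁, S₂} := by
  obtain ⟨e, he, rfl⟩ := hJ'
  revert he
  induction e using Sym2.ind with
  | _ a₀ b₀ =>
  intro he
  have hab : X.Adj a₀ b₀ := he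
  set J : Set (Sym2 V) := {f | Relation.ReflTransGen (EdgeRel X) s(a₀, b₀) f} with hJdef
  have hJ : J = {f | Relation.ReflTransGen (EdgeRel X) s(a₀, b₀) f} := rfl
  have hJ' : J = {f | Relation.ReflTransGen (EdgeRel X) s(b₀, a₀) f} := by
    rw [hJdef, Sym2.eq_swap]
  refine ⟨{w | (X.deleteEdges J).Reachable a₀ w}, {w | (X.deleteEdges J).Reachable b₀ w},
    ?_, ?_⟩
  · intro h0
    have ha : a₀ ∈ {w | (X.deleteEdges J).Reachable a₀ w} := Reachable.refl _
    rw [h0] at ha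
    obtain ⟨w⟩ := (ha : (X.deleteEdges J).Reachable b₀ a₀)
    have hbW : X.dist b₀ b₀ < X.dist b₀ a₀ := by
      have e1 : X.dist b₀ b₀ = 0 := dist_self
      have e2 : X.dist b₀ a₀ = 1 := dist_eq_one_iff_adj.mpr hab.symm
      omega
    have h6 := W_of_reach hT hTC hQC hK23 hc hab.symm hJ' w hbW
    have e3 : X.dist a₀ a₀ = 0 := dist_self
    omega
  · ext S
    simp only [Set.mem_setOf_eq, Set.mem_insert_iff, Set.mem_singleton_iff]
    constructor
    · rintro ⟨v, rfl⟩
      rcases side_dich hT hTC hc hab v with hvW | hvW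
      · left
        ext w
        simp only [Set.mem_setOf_eq]
        have hr : (X.deleteEdges J).Reachable a₀ v :=
          reach_of_W hT hTC hQC hK23 hc hab hJ _ v hvW rfl
        exact ⟨fun h => hr.trans h, fun h => hr.symm.trans h⟩
      · right
        ext w
        simp only [Set.mem_setOf_eq]
        have hr : (X.deleteEdges J).Reachable b₀ v :=
          reach_of_W hT hTC hQC hK23 hc hab.symm hJ' _ v hvW rfl
        exact ⟨fun h => hr.trans h, fun h => hr.symm.trans h⟩
    · rintro (rfl | rfl)
      · exact ⟨a₀, rfl⟩
      · exact ⟨b₀, rfl⟩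

end Sectors
end QMAux
namespace QMAux
set_option linter.unusedSectionVars false
section Median

open Relation

variable {X : SimpleGraph V}
variable (hT : TFree X) (hTC : TriangleCond X) (hQC : QuadCond X)
  (hK23 : NoInducedK23 X) (hc : X.Connected)

include hT hTC hQC hc in
/-- Lemma L: if `a` is not between `b` and `c`, it has a neighbour strictly
closer to both. -/
lemma lemL : ∀ n a c b, X.dist a c = n → X.dist b c < X.dist b a + X.dist a c →
    ∃ a', X.Adj a a' ∧ X.dist a' b + 1 = X.dist a b ∧ X.dist a' c + 1 = X.dist a c := by
  intro n
  induction n using Nat.strong_induction_on with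
  | _ n ih =>
  intro a c b hac hlt
  match n, hac with
  | 0, hac =>
    have : a = c := hc.dist_eq_zero_iff.mp hac
    subst this
    have c1 : X.dist b a = X.dist a b := dist_comm
    omega
  | (m+1), hac =>
  obtain ⟨y, hay, hyc⟩ := dist_step hc hac
  rcases bip hT hTC hc hay b with h1 | h2
  swap
  · -- good case h2 : X.dist b a = X.dist b y + 1
    refine ⟨y, hay, ?_, by omega⟩
    have c1 : X.dist y b = X.dist b y := dist_comm
    have c2 : X.dist a b = X.dist b a := dist_comm
    omega
  -- bad case h1 : X.dist b y = X.dist b a + 1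
  match m, hyc with
  | 0, hyc =>
    -- y = c
    exfalso
    have : y = c := hc.dist_eq_zero_iff.mp hyc
    subst this
    omega
  | (m+1), hyc =>
  have hylt : X.dist b c < X.dist b y + X.dist y c := by omega
  obtain ⟨y', hyy', hy'b, hy'c⟩ := ih (m+1) (by omega) y c b hyc hylt
  -- facts about y'
  have hy'b2 : X.dist y' b = X.dist b a := by
    have c1 : X.dist y b = X.dist b y := dist_comm
    omega
  have hy'ne : y' ≠ a := by
    intro h0; subst h0; omega
  have hy'nadj : ¬ X.Adj a y' := by
    intro h0
    rcases bip hT hTC hc h0 c with h3 | h4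
    · have c1 : X.dist c y' = X.dist y' c := dist_comm
      have c2 : X.dist c a = X.dist a c := dist_comm
      omega
    · have c1 : X.dist c y' = X.dist y' c := dist_comm
      have c2 : X.dist c a = X.dist a c := dist_comm
      omega
  have hd2 : X.dist a y' = 2 := by
    have t1 : X.dist a y' ≤ X.dist a y + X.dist y y' := hc.dist_triangle
    have e1 : X.dist a y = 1 := dist_eq_one_iff_adj.mpr hay
    have e2 : X.dist y y' = 1 := dist_eq_one_iff_adj.mpr hyy'
    have e3 : X.dist a y' ≠ 0 := fun h0 => hy'ne (hc.dist_eq_zero_iff.mp h0).symm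
    have e4 : X.dist a y' ≠ 1 := fun h0 => hy'nadj (dist_eq_one_iff_adj.mp h0)
    omega
  have c3 : X.dist b y' = X.dist y' b := dist_comm
  obtain ⟨w, hwa, hwy', hw⟩ := hQC b a y' y hay.symm hyy' hd2 (by omega) (by omega)
  refine ⟨w, hwa.symm, ?_, ?_⟩
  · have c4 : X.dist b w = X.dist w b := dist_comm
    have c5 : X.dist a b = X.dist b a := dist_comm
    omega
  · have t1 : X.dist w c ≤ X.dist w y' + X.dist y' c := hc.dist_triangle
    have t2 : X.dist a c ≤ X.dist a w + X.dist w c := hc.dist_triangle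
    have e1 : X.dist w y' = 1 := dist_eq_one_iff_adj.mpr hwy'
    have e2 : X.dist a w = 1 := dist_eq_one_iff_adj.mpr hwa.symm
    omega

include hT hTC hQC hc in
/-- median existence under triangle-freeness -/
lemma med_ex : ∀ N a b c, X.dist a b + X.dist a c = N → ∃ m, IsMedianOf X m a b c := by
  intro N
  induction N using Nat.strong_induction_on with
  | _ N ih =>
  intro a b c hN
  by_cases hmid : X.dist b a + X.dist a c = X.dist b c
  · refine ⟨a, ?_, ?_, ?_⟩
    · show X.dist a a + X.dist a b = X.dist a b
      have : X.dist a a = 0 := dist_self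
      omega
    · exact hmid
    · show X.dist a a + X.dist a c = X.dist a c
      have : X.dist a a = 0 := dist_self
      omega
  · have hlt : X.dist b c < X.dist b a + X.dist a c := by
      have t1 : X.dist b c ≤ X.dist b a + X.dist a c := hc.dist_triangle
      omega
    obtain ⟨a', haa', ha'b, ha'c⟩ := lemL hT hTC hQC hc (X.dist a c) a c b rfl hlt
    have c1 : X.dist a' b = X.dist b a' := dist_comm
    have c2 : X.dist a b = X.dist b a := dist_comm
    obtain ⟨m, hm1, hm2, hm3⟩ := ih (X.dist a' b + X.dist a' c) (by omega) a' b c rfl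
    -- hm1 : dist a' m + dist m b = dist a' b etc.
    have ham : X.dist a m = X.dist a' m + 1 := by
      have t1 : X.dist a m ≤ X.dist a a' + X.dist a' m := hc.dist_triangle
      have t2 : X.dist a b ≤ X.dist a m + X.dist m b := hc.dist_triangle
      have e1 : X.dist a a' = 1 := dist_eq_one_iff_adj.mpr haa'
      have h1 : X.dist a' m + X.dist m b = X.dist a' b := hm1
      omega
    refine ⟨m, ?_, hm2, ?_⟩
    · show X.dist a m + X.dist m b = X.dist a b
      have h1 : X.dist a' m + X.dist m b = X.dist a' b := hm1
      omega
    · show X.dist a m + X.dist m c = X.dist a c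
      have h3 : X.dist a' m + X.dist m c = X.dist a' c := hm3
      omega

include hT hTC hQC hK23 hc in
/-- median uniqueness under triangle-freeness -/
lemma med_uniq {a b c m m' : V} (hm : IsMedianOf X m a b c)
    (hm' : IsMedianOf X m' a b c) : m' = m := by
  by_contra hne
  obtain ⟨hm1, hm2, hm3⟩ := hm
  obtain ⟨hm1', hm2', hm3'⟩ := hm'
  have hd : X.dist m m' ≠ 0 := fun h0 => hne (hc.dist_eq_zero_iff.mp h0).symm
  obtain ⟨n, hmn, hnm'⟩ := dist_step hc (show X.dist m m' = (X.dist m m' - 1) + 1 by omega)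
  -- m' is on the n-side of the wall of edge (m,n)
  have hm'side : X.dist m' n < X.dist m' m := by
    have c1 : X.dist m' n = X.dist n m' := dist_comm
    have c2 : X.dist m' m = X.dist m m' := dist_comm
    omega
  -- each of a b c is on exactly one side; at most one on the n-side
  have key : ∀ x y : V, X.dist x m + X.dist m y = X.dist x y →
      X.dist x n < X.dist x m → X.dist y n < X.dist y m → False := by
    intro x y hxy hx hy
    have hx1 : X.dist x m = X.dist x n + 1 := by
      have := bip hT hTC hc hmn x; omega
    have hy1 : X.dist y m = X.dist y n + 1 := by
      have := bip hT hTC hc hmn y; omega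
    have t1 : X.dist x y ≤ X.dist x n + X.dist n y := hc.dist_triangle
    have c1 : X.dist n y = X.dist y n := dist_comm
    have c2 : X.dist m y = X.dist y m := dist_comm
    omega
  -- at least two of a,b,c are on the m-side; m' is in the interval of those two,
  -- and the m-side is convex: contradiction.
  have conv : ∀ x y : V, X.dist x m < X.dist x n → X.dist y m < X.dist y n →
      X.dist x m' + X.dist m' y = X.dist x y → False := by
    intro x y hx hy hxy
    have := convex_W hT hTC hQC hK23 hc hmn (X.dist x m') x m' y hx hy hxy rfl
    omega
  have hmab : X.dist a m + X.dist m b = X.dist a b := hm1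
  have hmbc : X.dist b m + X.dist m c = X.dist b c := hm2
  have hmac : X.dist a m + X.dist m c = X.dist a c := hm3
  have cab : X.dist m b = X.dist b m := dist_comm
  have cbc : X.dist m c = X.dist c m := dist_comm
  rcases side_dich hT hTC hc hmn a with ha | ha <;>
    rcases side_dich hT hTC hc hmn b with hb | hb <;>
    rcases side_dich hT hTC hc hmn c with hclem | hclem
  · exact conv a b ha hb hm1'
  · exact conv a b ha hb hm1'
  · exact conv a c ha hclem hm3'
  · exact key b c (by omega) hb hclem
  · exact conv b c hb hclem hm2'
  · exact key a c (by omega) ha hclem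
  · exact key a b (by omega) ha hb
  · exact key a b (by omega) ha hb

end Median
end QMAux
namespace QMAux
set_option linter.unusedSectionVars false
section Gates

open Relation

variable {X : SimpleGraph V}
variable (hTC : TriangleCond X) (hQC : QuadCond X)
  (hK4 : NoInducedK4minus X) (hc : X.Connected)
variable {C : Set V}

/-- gate of `x` in `C` -/
def IsGateOf (X : SimpleGraph V) (C : Set V) (x g : V) : Prop :=
  g ∈ C ∧ ∀ z ∈ C, z ≠ g → X.dist x z = X.dist x g + 1

lemma exists_max_clique {u v w : V} (h1 : X.Adj u v) (h2 : X.Adj v w) (h3 : X.Adj u w) :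
    ∃ C : Set V, u ∈ C ∧ v ∈ C ∧ w ∈ C ∧ C.Pairwise X.Adj ∧
      ∀ D : Set V, C ⊆ D → D.Pairwise X.Adj → D ⊆ C := by
  have hclq : ({u, v, w} : Set V).Pairwise X.Adj := by
    intro x hx y hy hne
    simp only [Set.mem_insert_iff, Set.mem_singleton_iff] at hx hy
    rcases hx with rfl | rfl | rfl <;> rcases hy with rfl | rfl | rfl <;>
      first
        | exact absurd rfl hne
        | exact h1 | exact h1.symm | exact h2 | exact h2.symm | exact h3 | exact h3.symm
  obtain ⟨C, hsub, hmaxl⟩ :=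
    zorn_subset_nonempty {D : Set V | D.Pairwise X.Adj}
      (fun c hcS hchain _hne => by
        refine ⟨⋃₀ c, ?_, fun s hs => Set.subset_sUnion_of_mem hs⟩
        intro x hx y hy hne
        obtain ⟨s, hsc, hxs⟩ := hx
        obtain ⟨t, htc, hyt⟩ := hy
        by_cases hst : s = t
        · subst hst; exact hcS hsc hxs hyt hne
        · rcases hchain hsc htc hst with hsub | hsub
          · exact hcS htc (hsub hxs) hyt hne
          · exact hcS hsc hxs (hsub hyt) hne)
      {u, v, w} hclq
  refine ⟨C, hsub (by simp), hsub (by simp), hsub (by simp), hmaxl.1, ?_⟩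
  intro D hCD hD
  exact hmaxl.2 hD hCD

include hTC hK4 hc in
lemma gate_exists (hC : C.Pairwise X.Adj)
    (hmax : ∀ D : Set V, C ⊆ D → D.Pairwise X.Adj → D ⊆ C)
    (hne : C.Nonempty) (x : V) : ∃ g, IsGateOf X C x g := by
  obtain ⟨z₀, hz₀⟩ := hne
  have hSne : {n | ∃ z ∈ C, X.dist x z = n}.Nonempty := ⟨X.dist x z₀, z₀, hz₀, rfl⟩
  obtain ⟨g, hgC, hgk⟩ := Nat.sInf_mem hSne
  set k := sInf {n | ∃ z ∈ C, X.dist x z = n} with hk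
  refine ⟨g, hgC, ?_⟩
  intro z hz hzg
  have hge : k ≤ X.dist x z := Nat.sInf_le ⟨z, hz, rfl⟩
  have hadjgz : X.Adj g z := hC hgC hz (Ne.symm hzg)
  have hle : X.dist x z ≤ k + 1 := by
    have t1 : X.dist x z ≤ X.dist x g + X.dist g z := hc.dist_triangle
    have e1 : X.dist g z = 1 := dist_eq_one_iff_adj.mpr hadjgz
    omega
  rcases Nat.lt_or_ge k (X.dist x z) with hlt | hge2
  · omega
  · -- dist x z = k : use triangle condition and K4⁻ to contradict
    exfalso
    have heq : X.dist x g = X.dist x z := by omega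
    obtain ⟨t, htg, htz, htd⟩ := hTC x g z hadjgz heq
    have htnotC : t ∉ C := by
      intro htC
      have hmemt : X.dist x t ∈ {n | ∃ z ∈ C, X.dist x z = n} := ⟨t, htC, rfl⟩
      have := Nat.sInf_le hmemt
      omega
    have hnotcl : ¬ (insert t C).Pairwise X.Adj := by
      intro hP
      exact htnotC (hmax _ (Set.subset_insert t C) hP (Set.mem_insert t C))
    rw [@Set.pairwise_insert_of_symmetric _ _ _ _ X.symm] at hnotcl
    push_neg at hnotcl
    obtain ⟨b', hb'C, hb'ne, hb'nadj⟩ := hnotcl hC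
    have hb'g : b' ≠ g := by rintro rfl; exact hb'nadj htg
    have hb'z : b' ≠ z := by rintro rfl; exact hb'nadj htz
    exact hK4 ⟨g, z, t, b', hadjgz, htg.symm, hC hgC hb'C hb'g.symm, htz.symm,
      hC hz hb'C hb'z.symm, hb'ne, hb'nadj⟩

lemma gate_uniq {x g g' : V} (h1 : IsGateOf X C x g) (h2 : IsGateOf X C x g') : g = g' := by
  by_contra hne
  have e1 := h1.2 g' h2.1 (Ne.symm hne)
  have e2 := h2.2 g h1.1 hne
  omega

lemma gate_self (hC : C.Pairwise X.Adj) {z : V} (hz : z ∈ C) : IsGateOf X C z z := by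
  refine ⟨hz, fun t ht htne => ?_⟩
  have e1 : X.dist z t = 1 := dist_eq_one_iff_adj.mpr (hC hz ht (Ne.symm htne))
  have e2 : X.dist z z = 0 := dist_self
  omega

include hc in
lemma gate_dist_eq {x x' g g' : V} (hadj : X.Adj x x') (hg : IsGateOf X C x g)
    (hg' : IsGateOf X C x' g') (hne : g ≠ g') : X.dist x g = X.dist x' g' := by
  have e1 := hg.2 g' hg'.1 (Ne.symm hne)
  have e2 := hg'.2 g hg.1 hne
  have t1 : X.dist x g' ≤ X.dist x x' + X.dist x' g' := hc.dist_triangle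
  have t2 : X.dist x' g ≤ X.dist x' x + X.dist x g := hc.dist_triangle
  have a1 : X.dist x x' = 1 := dist_eq_one_iff_adj.mpr hadj
  have a2 : X.dist x' x = 1 := dist_eq_one_iff_adj.mpr hadj.symm
  omega

/-- one step of the triangle relation inside a clique -/
lemma tri_step (hC : C.Pairwise X.Adj) {a b c : V} (ha : a ∈ C) (hb : b ∈ C) (hcc : c ∈ C)
    (hab : a ≠ b) (hbc : b ≠ c) (hac : a ≠ c) : EdgeRel X s(a, b) s(b, c) :=
  Or.inl ⟨a, b, c, hC ha hb hab, hC hb hcc hbc, hC ha hcc hac, rfl, rfl⟩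

lemma clique_chain (hC : C.Pairwise X.Adj) {u v p q : V} (hu : u ∈ C) (hv : v ∈ C)
    (hp : p ∈ C) (hq : q ∈ C) (huv : u ≠ v) (hpq : p ≠ q) :
    Relation.ReflTransGen (EdgeRel X) s(u, v) s(p, q) := by
  have swap : ∀ x y : V, Relation.ReflTransGen (EdgeRel X) s(u, v) s(x, y) →
      Relation.ReflTransGen (EdgeRel X) s(u, v) s(y, x) := by
    intro x y h
    rwa [show s(y, x) = s(x, y) from Sym2.eq_swap]
  by_cases hqv : q = v
  · subst hqv
    by_cases hpu : p = u
    · subst hpu; exact Relation.ReflTransGen.refl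
    · exact swap _ _ (Relation.ReflTransGen.single
        (tri_step hC hu hq hp huv (Ne.symm hpq) (Ne.symm hpu)))
  · by_cases hqu : q = u
    · subst hqu
      by_cases hpv : p = v
      · subst hpv
        exact swap _ _ Relation.ReflTransGen.refl
      · exact (Relation.ReflTransGen.single
            (tri_step hC hq hv hp huv (Ne.symm hpv) (Ne.symm hpq))).tail
          (tri_step hC hv hp hq (Ne.symm hpv) hpq huv.symm)
    · by_cases hpu : p = u
      · subst hpu
        exact swap _ _ ((Relation.ReflTransGen.single
            (tri_step hC hu hv hq huv (fun h => hqv h.symm) hpq)).tail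
          (tri_step hC hv hq hu (fun h => hqv h.symm) hqu (Ne.symm huv)))
      · by_cases hpv : p = v
        · subst hpv
          exact Relation.ReflTransGen.single
            (tri_step hC hu hp hq huv hpq (fun h => hqu h.symm))
        · exact (Relation.ReflTransGen.single
              (tri_step hC hu hv hp huv (Ne.symm hpv) (Ne.symm hpu))).tail
            (tri_step hC hv hp hq (Ne.symm hpv) hpq (fun h => hqv h.symm))

end Gates
end QMAux
namespace QMAux
set_option linter.unusedSectionVars false
section Gates2

open Relation

variable {X : SimpleGraph V}
variable (hTC : TriangleCond X) (hQC : QuadCond X)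
  (hK4 : NoInducedK4minus X) (hc : X.Connected)
variable {C : Set V}

include hTC hQC hK4 hc in
/-- an edge whose endpoints have distinct gates in the maximal clique `C` is
in the hyperplane class of any edge of `C`. -/
lemma gate_edge_chain (hC : C.Pairwise X.Adj)
    (hmax : ∀ D : Set V, C ⊆ D → D.Pairwise X.Adj → D ⊆ C) :
    ∀ k x x' g g', X.Adj x x' → IsGateOf X C x g → IsGateOf X C x' g' → g ≠ g' →
      X.dist x g = k → Relation.ReflTransGen (EdgeRel X) s(g, g') s(x, x') := by
  intro k
  induction k with
  | zero =>
    intro x x' g g' hadj hg hg' hne h0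
    have h0' : X.dist x' g' = 0 := by
      rw [← gate_dist_eq hc hadj hg hg' hne, h0]
    have e1 : x = g := hc.dist_eq_zero_iff.mp h0
    have e2 : x' = g' := hc.dist_eq_zero_iff.mp h0'
    subst e1; subst e2
    exact Relation.ReflTransGen.refl
  | succ k ih =>
    intro x x' g g' hadj hg hg' hne hk
    have hk' : X.dist x' g' = k + 1 := by
      rw [← gate_dist_eq hc hadj hg hg' hne, hk]
    have hxg' : X.dist x g' = k + 2 := by
      have := hg.2 g' hg'.1 (Ne.symm hne); omega
    have hx'g : X.dist x' g = k + 2 := by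
      have := hg'.2 g hg.1 hne; omega
    obtain ⟨y, hxy, hyg⟩ := dist_step hc hk
    -- gate of y is g
    have hgy : IsGateOf X C y g := by
      refine ⟨hg.1, fun z hz hzg => ?_⟩
      have t1 : X.dist y z ≤ X.dist y g + X.dist g z := hc.dist_triangle
      have t2 : X.dist x z ≤ X.dist x y + X.dist y z := hc.dist_triangle
      have e1 : X.dist g z = 1 := dist_eq_one_iff_adj.mpr (hC hg.1 hz (Ne.symm hzg))
      have e2 : X.dist x y = 1 := dist_eq_one_iff_adj.mpr hxy
      have e3 : X.dist x z = k + 2 := by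
        have := hg.2 z hz hzg; omega
      omega
    have hyne : y ≠ x' := by
      intro h0; subst h0
      exact hne (gate_uniq hgy hg')
    have hynadj : ¬ X.Adj y x' := by
      intro h0
      have := gate_dist_eq hc h0 hgy hg' hne
      omega
    have hyd2 : X.dist y x' = 2 := by
      have t1 : X.dist y x' ≤ X.dist y x + X.dist x x' := hc.dist_triangle
      have e1 : X.dist y x = 1 := dist_eq_one_iff_adj.mpr hxy.symm
      have e2 : X.dist x x' = 1 := dist_eq_one_iff_adj.mpr hadj
      have e3 : X.dist y x' ≠ 0 := fun h0 => hyne (hc.dist_eq_zero_iff.mp h0)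
      have e4 : X.dist y x' ≠ 1 := fun h0 => hynadj (dist_eq_one_iff_adj.mp h0)
      omega
    have hyg' : X.dist y g' = k + 1 := by
      have := hgy.2 g' hg'.1 (Ne.symm hne); omega
    have c1 : X.dist g' x = X.dist x g' := dist_comm
    have c2 : X.dist g' y = X.dist y g' := dist_comm
    have c3 : X.dist g' x' = X.dist x' g' := dist_comm
    obtain ⟨t, hty, htx', htd⟩ := hQC g' y x' x hxy hadj hyd2 (by omega) (by omega)
    have htg' : X.dist t g' = k := by
      have c4 : X.dist g' t = X.dist t g' := dist_comm
      omega
    -- gate of t is g'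
    have hgt : IsGateOf X C t g' := by
      refine ⟨hg'.1, fun z hz hzg' => ?_⟩
      have t1 : X.dist t z ≤ X.dist t g' + X.dist g' z := hc.dist_triangle
      have t2 : X.dist x' z ≤ X.dist x' t + X.dist t z := hc.dist_triangle
      have e1 : X.dist g' z = 1 := dist_eq_one_iff_adj.mpr (hC hg'.1 hz (Ne.symm hzg'))
      have e2 : X.dist x' t = 1 := dist_eq_one_iff_adj.mpr htx'.symm
      have e3 : X.dist x' z = k + 2 := by
        have := hg'.2 z hz hzg'; omega
      omega
    have hchain := ih y t g g' hty.symm hgy hgt hne hyg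
    refine hchain.tail (Or.inr ⟨t, y, x, x', hty, hxy.symm, hadj, htx'.symm, ?_, ?_, hyne, hynadj,
      Sym2.eq_swap, rfl⟩)
    · intro h0; rw [h0] at htg'; omega
    · intro h0
      have t1 : X.dist x g' ≤ X.dist x t + X.dist t g' := hc.dist_triangle
      have e1 : X.dist x t = 1 := dist_eq_one_iff_adj.mpr h0.symm
      omega

include hTC hQC hK4 hc in
lemma walk_gate (hC : C.Pairwise X.Adj)
    (hmax : ∀ D : Set V, C ⊆ D → D.Pairwise X.Adj → D ⊆ C)
    {u₀ v₀ : V} (hu₀ : u₀ ∈ C) (hv₀ : v₀ ∈ C) (hne₀ : u₀ ≠ v₀)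
    {J : Set (Sym2 V)} (hJ : J = {f | Relation.ReflTransGen (EdgeRel X) s(u₀, v₀) f}) :
    ∀ {x y : V}, (X.deleteEdges J).Walk x y →
      ∀ {g g'}, IsGateOf X C x g → IsGateOf X C y g' → g = g' := by
  intro x y ω
  induction ω with
  | nil => exact fun hg hg' => gate_uniq hg hg'
  | @cons p q r h ω ih =>
    intro g g' hg hg'
    rw [SimpleGraph.deleteEdges_adj] at h
    obtain ⟨hadj, hnm⟩ := h
    obtain ⟨gb, hgb⟩ := gate_exists hTC hK4 hc hC hmax ⟨u₀, hu₀⟩ q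
    have hggb : g = gb := by
      by_contra hnegb
      refine hnm ?_
      rw [hJ, Set.mem_setOf_eq]
      exact (clique_chain hC hu₀ hv₀ hg.1 hgb.1 hne₀ hnegb).trans
        (gate_edge_chain hTC hQC hK4 hc hC hmax (X.dist p g) p q g gb hadj hg hgb hnegb rfl)
    exact hggb.trans (ih hgb hg')

include hTC hQC hK4 hc in
/-- Part 4 (contrapositive form): a triangle's hyperplane does not delimit
exactly two sectors. -/
lemma triangle_not_two (hK4' : NoInducedK4minus X) {u v w : V}
    (h1 : X.Adj u v) (h2 : X.Adj v w) (h3 : X.Adj u w) :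
    ¬ (∀ J : Set (Sym2 V), IsHyperplane X J →
        ∃ S₁ S₂ : Set V, S₁ ≠ S₂ ∧ {S : Set V | IsSectorOf X J S} = {S₁, S₂}) := by
  intro hsec
  obtain ⟨C, huC, hvC, hwC, hC, hmax⟩ := exists_max_clique h1 h2 h3
  set J : Set (Sym2 V) := {f | Relation.ReflTransGen (EdgeRel X) s(u, v) f} with hJdef
  have hJ : J = {f | Relation.ReflTransGen (EdgeRel X) s(u, v) f} := rfl
  obtain ⟨S₁, S₂, hS12, hset⟩ := hsec J ⟨s(u, v), h1, rfl⟩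
  -- the three vertices are pairwise non-reachable in `X` minus `J`
  have hsep : ∀ x y : V, x ∈ C → y ∈ C → x ≠ y →
      ¬ (X.deleteEdges J).Reachable x y := by
    intro x y hx hy hxy hr
    obtain ⟨ω⟩ := hr
    exact hxy (walk_gate hTC hQC hK4 hc hC hmax huC hvC h1.ne hJ ω
      (gate_self hC hx) (gate_self hC hy))
  have hmem : ∀ z : V, {t | (X.deleteEdges J).Reachable z t} ∈ ({S₁, S₂} : Set (Set V)) := by
    intro z
    rw [← hset]
    exact ⟨z, rfl⟩
  have hdiff : ∀ x y : V, x ∈ C → y ∈ C → x ≠ y →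
      {t | (X.deleteEdges J).Reachable x t} ≠ {t | (X.deleteEdges J).Reachable y t} := by
    intro x y hx hy hxy h0
    have hxmem : x ∈ {t | (X.deleteEdges J).Reachable x t} := Reachable.refl _
    rw [h0] at hxmem
    exact hsep y x hy hx (Ne.symm hxy) hxmem
  have mu := hmem u
  have mv := hmem v
  have mw := hmem w
  simp only [Set.mem_insert_iff, Set.mem_singleton_iff] at mu mv mw
  have duv := hdiff u v huC hvC h1.ne
  have duw := hdiff u w huC hwC h3.ne
  have dvw := hdiff v w hvC hwC h2.ne
  rcases mu with h4 | h4 <;> rcases mv with h5 | h5 <;> rcases mw with h6 | h6 <;>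
    first
      | exact duv (h4.trans h5.symm)
      | exact duw (h4.trans h6.symm)
      | exact dvw (h5.trans h6.symm)

end Gates2
end QMAux

/-- A quasi-median graph is median iff it is triangle-free, which holds iff every
hyperplane delimits exactly two sectors. -/
theorem stmt4 (X : SimpleGraph V) (hX : QuasiMedian X) :
    (MedianGraph X ↔ ¬ ∃ a b c : V, X.Adj a b ∧ X.Adj b c ∧ X.Adj a c) ∧
      ((¬ ∃ a b c : V, X.Adj a b ∧ X.Adj b c ∧ X.Adj a c) ↔
        ∀ J : Set (Sym2 V), IsHyperplane X J →
          ∃ S₁ S₂ : Set V, S₁ ≠ S₂ ∧ {S : Set V | IsSectorOf X J S} = {S₁, S₂}) := by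
  obtain ⟨hc, hTC, hQC, hK23, hK4⟩ := hX
  constructor
  · constructor
    · -- a median graph has no triangle
      rintro ⟨-, hmed⟩ ⟨a, b, c, h1, h2, h3⟩
      obtain ⟨m, ⟨hm1, hm2, hm3⟩, -⟩ := hmed a b c
      have e1 : X.dist a b = 1 := dist_eq_one_iff_adj.mpr h1
      have e2 : X.dist b c = 1 := dist_eq_one_iff_adj.mpr h2
      have e3 : X.dist a c = 1 := dist_eq_one_iff_adj.mpr h3
      have f1 : X.dist a m + X.dist m b = X.dist a b := hm1
      have f2 : X.dist b m + X.dist m c = X.dist b c := hm2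
      have f3 : X.dist a m + X.dist m c = X.dist a c := hm3
      have c1 : X.dist m b = X.dist b m := dist_comm
      omega
    · -- a triangle-free quasi-median graph is median
      intro hT
      refine ⟨hc, fun a b c => ?_⟩
      obtain ⟨m, hm⟩ := QMAux.med_ex hT hTC hQC hc (X.dist a b + X.dist a c) a b c rfl
      exact ⟨m, hm, fun m' hm' => QMAux.med_uniq hT hTC hQC hK23 hc hm hm'⟩
  · constructor
    · intro hT J hJ
      exact QMAux.two_sectors hT hTC hQC hK23 hc hJ
    · intro hsec
      rintro ⟨a, b, c, h1, h2, h3⟩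
      exact QMAux.triangle_not_two hTC hQC hK4 hc hK4 h1 h2 h3 hsec
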